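/- Let R be a commutative noetherian local ring and M a finitely generated R-module of finite G-dimension. If G is a bounded proper G-resolution of M, then χ^G(M) = Σ_{n ≥ 0} (-1)^n β_0^R(G_n), where β_0^R denotes minimal number of generators. In particular, when G is strict, χ^G(M) = β_0^R(G_0) + Σ_{n ≥ 1} (-1)^n rank_R(G_n). -/

import Mathlib

open CategoryTheory Opposite IsLocalRing

noncomputable section

universe u

variable (R : Type u) [CommRing R]

/-- The minimal number of generators of a module. -/
def nGens (M : Type u) [AddCommGroup M] [Module R M] : ℕ :=
  sInf {n | ∃ s : Finset M, s.card = n ∧ Submodule.span R (s : Set M) = ⊤}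

/-- The length of a module, i.e. the length of a longest chain of submodules,
as a natural number (junk value `0` if infinite). -/
def lengthNat (M : Type u) [AddCommGroup M] [Module R M] : ℕ :=
  (WithBot.unbotD 0 (Order.krullDim (Submodule R M))).toNat

/-- `M` has rank `r`: the localization of `M` at the set of nonzerodivisors of `R`
is free of rank `r`. -/
def HasRank (M : Type u) [AddCommGroup M] [Module R M] (r : ℕ) : Prop :=
  Nonempty (LocalizedModule (nonZeroDivisors R) M ≃ₗ[Localization (nonZeroDivisors R)]
    (Fin r → Localization (nonZeroDivisors R)))

/-- A finitely generated module `G` is totally reflexive if the biduality map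
`G → G^{**}` is bijective and `Ext^i(G, R) = 0 = Ext^i(G^*, R)` for all `i ≥ 1`. -/
def IsTotallyReflexive (M : Type u) [AddCommGroup M] [Module R M] : Prop :=
  Module.Finite R M ∧ Function.Bijective (Module.Dual.eval R M) ∧
  (∀ i : ℕ, 0 < i →
    Subsingleton (((Ext R (ModuleCat.{u} R) i).obj (op (ModuleCat.of R M))).obj
      (ModuleCat.of R R))) ∧
  (∀ i : ℕ, 0 < i →
    Subsingleton (((Ext R (ModuleCat.{u} R) i).obj (op (ModuleCat.of R (Module.Dual R M)))).obj
      (ModuleCat.of R R)))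

/-- A resolution of a module `M`: a nonnegatively graded chain complex together with
an augmentation map to `M` making the augmented complex exact. -/
structure Resolution (M : Type u) [AddCommGroup M] [Module R M] where
  C : ChainComplex (ModuleCat.{u} R) ℕ
  aug : C.X 0 →ₗ[R] M
  aug_surj : Function.Surjective aug
  exact_zero : Function.Exact (C.d 1 0) aug
  exact_succ : ∀ n : ℕ, Function.Exact (C.d (n + 2) (n + 1)) (C.d (n + 1) n)

namespace Resolution

variable {R}
variable {M : Type u} [AddCommGroup M] [Module R M]

/-- A resolution is bounded if its modules vanish in all high degrees. -/
def IsBounded (P : Resolution R M) : Prop := ∃ N : ℕ, ∀ n, N < n → Subsingleton (P.C.X n)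

/-- A resolution has length at most `i` if its modules vanish in degrees above `i`. -/
def LengthLE (P : Resolution R M) (i : ℕ) : Prop := ∀ n, i < n → Subsingleton (P.C.X n)

/-- A G-resolution: all modules in the resolution are totally reflexive. -/
def IsG (P : Resolution R M) : Prop := ∀ n, IsTotallyReflexive R (P.C.X n)

/-- A resolution by finitely generated free modules. -/
def IsFiniteFree (P : Resolution R M) : Prop :=
  ∀ n, Module.Free R (P.C.X n) ∧ Module.Finite R (P.C.X n)

/-- A strict G-resolution: degree `0` is totally reflexive and all positive degrees are
finitely generated free. -/
def IsStrict (P : Resolution R M) : Prop :=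
  IsTotallyReflexive R (P.C.X 0) ∧
    ∀ n : ℕ, Module.Free R (P.C.X (n + 1)) ∧ Module.Finite R (P.C.X (n + 1))

/-- Minimality of a resolution over a local ring: each differential maps into
`m` times the next module. -/
def IsMinimal [IsLocalRing R] (P : Resolution R M) : Prop :=
  ∀ n : ℕ, LinearMap.range (P.C.d (n + 1) n).hom ≤
    (maximalIdeal R) • (⊤ : Submodule R (P.C.X n))

/-- A resolution is proper if `Hom(H, -)` applied to the augmented resolution is exact for
every totally reflexive module `H`. -/
def IsProper (P : Resolution R M) : Prop :=
  ∀ (H : Type u) [AddCommGroup H] [Module R H], IsTotallyReflexive R H →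
    (Function.Surjective (fun g : H →ₗ[R] P.C.X 0 => P.aug ∘ₗ g)) ∧
    Function.Exact (fun g : H →ₗ[R] P.C.X 1 => ((P.C.d 1 0).hom : P.C.X 1 →ₗ[R] P.C.X 0) ∘ₗ g)
      (fun g : H →ₗ[R] P.C.X 0 => P.aug ∘ₗ g) ∧
    ∀ n : ℕ, Function.Exact
      (fun g : H →ₗ[R] P.C.X (n + 2) =>
        ((P.C.d (n + 2) (n + 1)).hom : P.C.X (n + 2) →ₗ[R] P.C.X (n + 1)) ∘ₗ g)
      (fun g : H →ₗ[R] P.C.X (n + 1) =>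
        ((P.C.d (n + 1) n).hom : P.C.X (n + 1) →ₗ[R] P.C.X n) ∘ₗ g)

end Resolution

/-- `M` has finite projective dimension: it admits a bounded resolution by finitely
generated free modules. -/
def HasFinitePD (M : Type u) [AddCommGroup M] [Module R M] : Prop :=
  ∃ P : Resolution R M, P.IsFiniteFree ∧ P.IsBounded

/-- `M` has finite G-dimension: it admits a bounded G-resolution. -/
def HasFiniteGDim (M : Type u) [AddCommGroup M] [Module R M] : Prop :=
  ∃ P : Resolution R M, P.IsG ∧ P.IsBounded

/-- `G-dim M ≤ i`. -/
def GDimLE (M : Type u) [AddCommGroup M] [Module R M] (i : ℕ) : Prop :=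
  ∃ P : Resolution R M, P.IsG ∧ P.LengthLE i

section Betti

variable [IsLocalRing R]

/-- Precomposition with `f`, on homomorphisms into the residue field. -/
def homRes {A B : ModuleCat.{u} R} (f : A ⟶ B) :
    (B →ₗ[R] ResidueField R) →ₗ[ResidueField R] (A →ₗ[R] ResidueField R) where
  toFun g := g ∘ₗ (f.hom : A →ₗ[R] B)
  map_add' g₁ g₂ := by ext; rfl
  map_smul' c g := by ext; rfl

/-- The `n`-th Betti number of a complex `C`, defined as the dimension over the residue
field of the `n`-th cohomology of `Hom(C, k)`.  Applied to a proper G-resolution of `M`,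
this is the `n`-th relative Betti number `β^G_n(M)` of Avramov–Martsinkovsky; applied to a
free resolution of `M` it is the classical Betti number `β_n(M)`. -/
def gBetti (C : ChainComplex (ModuleCat.{u} R) ℕ) : ℕ → ℕ
  | 0 => Module.finrank (ResidueField R) (LinearMap.ker (homRes R (C.d 1 0)))
  | (n + 1) => Module.finrank (ResidueField R)
      (@HasQuotient.Quotient (LinearMap.ker (homRes R (C.d (n + 2) (n + 1)))) _ Submodule.hasQuotient
        ((LinearMap.range (homRes R (C.d (n + 1) n))).comap
          (LinearMap.ker (homRes R (C.d (n + 2) (n + 1)))).subtype))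

/-- The Euler characteristic of (the Betti numbers of) a complex:
`χ = Σ_n (-1)^n β_n`. -/
def gChi (C : ChainComplex (ModuleCat.{u} R) ℕ) : ℤ :=
  ∑ᶠ n : ℕ, (-1 : ℤ) ^ n * (gBetti R C n : ℤ)

/-- The `i`-th partial Euler characteristic of a complex: `χ_i = Σ_{n ≥ i} (-1)^{n-i} β_n`. -/
def gChiAt (C : ChainComplex (ModuleCat.{u} R) ℕ) (i : ℕ) : ℤ :=
  ∑ᶠ n : ℕ, if i ≤ n then (-1 : ℤ) ^ (n - i) * (gBetti R C n : ℤ) else 0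

end Betti

end



noncomputable section Aux

open Module IsLocalRing TensorProduct

universe v

variable {R : Type v} [CommRing R] [IsLocalRing R]

local notation "kk" => ResidueField R

lemma span_image_mk_eq_top {G : Type v} [AddCommGroup G] [Module R G]
    {s : Set G} (hs : Submodule.span R s = ⊤) :
    Submodule.span kk (TensorProduct.mk R kk G 1 '' s) = ⊤ := by
  have h1 : Submodule.map (TensorProduct.mk R kk G 1) (Submodule.span R s)
      = Submodule.span R (TensorProduct.mk R kk G 1 '' s) := Submodule.map_span _ _
  rw [hs, Submodule.map_top, LinearMap.range_eq_top.2
    (TensorProduct.mk_surjective R G kk Ideal.Quotient.mk_surjective)] at h1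
  rw [← Submodule.restrictScalars_span R kk Ideal.Quotient.mk_surjective] at h1
  exact (Submodule.restrictScalars_eq_top_iff _ _ _).mp h1.symm

lemma nGens_eq_finrank_tensor (G : Type v) [AddCommGroup G] [Module R G]
    [Module.Finite R G] :
    nGens R G = finrank kk (kk ⊗[R] G) := by
  classical
  set t := finrank kk (kk ⊗[R] G) with ht
  -- a spanning finset of card ≤ t
  obtain ⟨b⟩ : Nonempty (Basis (Fin t) kk (kk ⊗[R] G)) := ⟨Module.finBasis kk (kk ⊗[R] G)⟩
  have hsurj := TensorProduct.mk_surjective R G kk Ideal.Quotient.mk_surjective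
  choose f hf using fun i => hsurj (b i)
  have hspan : Submodule.span R (Set.range f) = ⊤ :=
    IsLocalRing.span_eq_top_of_tmul_eq_basis (R := R) (M := G) f b hf
  have hle : nGens R G ≤ t := by
    refine le_trans (Nat.sInf_le ⟨Finset.image f Finset.univ, rfl, ?_⟩) ?_
    · rw [Finset.coe_image, Finset.coe_univ, Set.image_univ, hspan]
    · exact le_trans (Finset.card_image_le) (by simp)
  have hge : t ≤ nGens R G := by
    have hne : {n | ∃ s : Finset G, s.card = n ∧ Submodule.span R (s : Set G) = ⊤}.Nonempty := by
      refine ⟨_, Finset.image f Finset.univ, rfl, ?_⟩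
      rw [Finset.coe_image, Finset.coe_univ, Set.image_univ, hspan]
    obtain ⟨s, hcard, hs⟩ := Nat.sInf_mem hne
    have h2 : Submodule.span kk ((TensorProduct.mk R kk G 1) '' (s : Set G)) = ⊤ :=
      span_image_mk_eq_top hs
    have h3 : t ≤ (s.image (TensorProduct.mk R kk G 1)).card := by
      have := finrank_span_finset_le_card (R := kk) (s.image (TensorProduct.mk R kk G 1))
      rw [Set.finrank, Finset.coe_image, h2, finrank_top] at this
      exact this
    exact le_trans (le_trans h3 Finset.card_image_le) (le_of_eq hcard)
  omega

lemma finrank_hom_residue (G : Type v) [AddCommGroup G] [Module R G]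
    [Module.Finite R G] :
    finrank kk (G →ₗ[R] kk) = nGens R G := by
  have e : (G →ₗ[R] kk) ≃ₗ[kk] (kk ⊗[R] G →ₗ[kk] kk) := LinearMap.liftBaseChangeEquiv kk
  rw [e.finrank_eq, nGens_eq_finrank_tensor]
  exact Subspace.dual_finrank_eq

instance fd_hom_residue (G : Type v) [AddCommGroup G] [Module R G]
    [Module.Finite R G] : FiniteDimensional kk (G →ₗ[R] kk) :=
  Module.Finite.equiv (LinearMap.liftBaseChangeEquiv (R := R) (M := G) (N := kk) kk).symm

end Aux


section Main

open Module Function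

universe w
variable {R : Type w} [CommRing R]

lemma subsingleton_linearMap {A N : Type w} [AddCommGroup A] [Module R A] [Subsingleton A]
    [AddCommGroup N] [Module R N] : Subsingleton (A →ₗ[R] N) :=
  ⟨fun f g => LinearMap.ext fun x => by rw [Subsingleton.elim x 0, map_zero, map_zero]⟩

lemma nGens_eq_finrank_of_free [IsLocalRing R] (G : Type w) [AddCommGroup G] [Module R G]
    [Module.Free R G] [Module.Finite R G] : nGens R G = finrank R G := by
  rw [nGens_eq_finrank_tensor, Module.finrank_baseChange]

end Main


set_option maxHeartbeats 1000000
set_option synthInstance.maxHeartbeats 400000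

/-- If `G` is a bounded proper G-resolution of a module `M` of finite G-dimension over a
commutative noetherian local ring, then `χ^G(M) = Σ_{n≥0} (-1)^n β₀(G_n)`; in particular,
when `G` is strict, `χ^G(M) = β₀(G_0) + Σ_{n≥1} (-1)^n rank(G_n)`. -/
theorem gChi_eq_alternating_sum_nGens
    (R : Type u) [CommRing R] [IsNoetherianRing R] [IsLocalRing R]
    (M : Type u) [AddCommGroup M] [Module R M] [Module.Finite R M]
    (hgdim : HasFiniteGDim R M)
    (P : Resolution R M) (hPg : P.IsG) (hPb : P.IsBounded) (hPp : P.IsProper) :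
    gChi R P.C = ∑ᶠ n : ℕ, (-1 : ℤ) ^ n * (nGens R (P.C.X n) : ℤ) ∧
    (P.IsStrict → gChi R P.C = (nGens R (P.C.X 0) : ℤ) +
      ∑ᶠ n : ℕ, (-1 : ℤ) ^ (n + 1) * (Module.finrank R (P.C.X (n + 1)) : ℤ)) := by
  classical
  obtain ⟨N, hN⟩ := hPb
  set k := ResidueField R
  set C := P.C with hC
  haveI hfin : ∀ n, Module.Finite R (C.X n) := fun n => (hPg n).1
  set δ : ∀ n : ℕ, ((C.X n) →ₗ[R] k) →ₗ[k] ((C.X (n+1)) →ₗ[R] k) :=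
    fun n => homRes R (C.d (n+1) n) with hδ
  have hFD : ∀ n, FiniteDimensional k ((C.X n) →ₗ[R] k) := fun n => by
    haveI := hfin n; exact fd_hom_residue _
  have hdd : ∀ (n : ℕ) x, C.d (n+1) n (C.d (n+2) (n+1) x) = 0 := fun n x =>
    (P.exact_succ n).apply_apply_eq_zero x
  have hcomp : ∀ n, LinearMap.range (δ n) ≤ LinearMap.ker (δ (n+1)) := by
    rintro n _ ⟨g, rfl⟩
    refine LinearMap.mem_ker.mpr (LinearMap.ext fun x => ?_)
    show g ((C.d (n+1) n).hom ((C.d (n+2) (n+1)).hom x)) = 0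
    exact (congrArg g (hdd n x)).trans (map_zero g)
  set K : ℕ → ℕ := fun n => Module.finrank k (LinearMap.ker (δ n)) with hK
  set Rk : ℕ → ℕ := fun n => Module.finrank k (LinearMap.range (δ n)) with hRk
  set D : ℕ → ℕ := fun n => Module.finrank k ((C.X n) →ₗ[R] k) with hD
  have hDK : ∀ n, D n = Rk n + K n := fun n => by
    haveI := hFD n
    exact (LinearMap.finrank_range_add_finrank_ker (δ n)).symm
  have hb0 : gBetti R C 0 = K 0 := rfl
  have hbsucc : ∀ n, gBetti R C (n+1) + Rk n = K (n+1) := by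
    intro n
    haveI := hFD (n+1)
    have h1 : gBetti R C (n+1) + Module.finrank k ((LinearMap.range (δ n)).comap
        (LinearMap.ker (δ (n+1))).subtype) = K (n+1) :=
      Submodule.finrank_quotient_add_finrank _
    rwa [LinearEquiv.finrank_eq (Submodule.comapSubtypeEquivOfLe (hcomp n))] at h1
  -- vanishing
  have hsub : ∀ n, N < n → Subsingleton ((C.X n) →ₗ[R] k) := by
    intro n hn
    haveI := hN n hn
    exact subsingleton_linearMap
  have hD0 : ∀ n, N < n → D n = 0 := fun n hn => by
    haveI := hsub n hn; exact Module.finrank_zero_of_subsingleton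
  have hK0 : ∀ n, N < n → K n = 0 := fun n hn => by
    haveI := hsub n hn; exact Module.finrank_zero_of_subsingleton
  have hRk0 : ∀ n, N ≤ n → Rk n = 0 := fun n hn => by
    haveI := hsub (n+1) (by omega); exact Module.finrank_zero_of_subsingleton
  have hbvan : ∀ n, N < n → gBetti R C n = 0 := by
    intro n hn
    match n, hn with
    | (n+1), hn => have h1 := hbsucc n; have h2 := hK0 (n+1) hn; omega
  -- the D n = nGens identity
  have hDn : ∀ n, (D n : ℤ) = (nGens R (C.X n) : ℤ) := fun n => by
    haveI := hfin n
    have h := finrank_hom_residue (R := R) (C.X n)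
    simp only [hD]
    exact_mod_cast h
  -- key telescoping identity
  have key : ∀ m, (∑ n ∈ Finset.range (m+1), (-1:ℤ)^n * (gBetti R C n : ℤ))
      = (∑ n ∈ Finset.range (m+1), (-1:ℤ)^n * (D n : ℤ)) - (-1:ℤ)^m * (Rk m : ℤ) := by
    intro m
    induction m with
    | zero =>
        simp only [zero_add, Finset.sum_range_one, pow_zero, one_mul, hb0]
        have h1 := hDK 0
        push_cast
        omega
    | succ m ih =>
        rw [Finset.sum_range_succ, Finset.sum_range_succ
          (f := fun n => (-1:ℤ)^n * (D n : ℤ)), ih]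
        have h1 := hbsucc m
        have h2 := hDK (m+1)
        have e1 : (gBetti R C (m+1) : ℤ) = (K (m+1) : ℤ) - (Rk m : ℤ) := by push_cast; omega
        have e2 : ((D (m+1) : ℕ) : ℤ) = (K (m+1) : ℤ) + (Rk (m+1) : ℤ) := by push_cast; omega
        rw [e1, e2]
        ring
  -- convert finsums to finite sums
  have hsupb : Function.support (fun n : ℕ => (-1:ℤ)^n * (gBetti R C n : ℤ))
      ⊆ (Finset.range (N+1) : Set ℕ) := by
    intro n hn
    simp only [Function.mem_support] at hn
    by_contra h
    simp only [Finset.coe_range, Set.mem_Iio, not_lt] at h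
    exact hn (by rw [hbvan n (by omega)]; simp)
  have hsupD : Function.support (fun n : ℕ => (-1:ℤ)^n * (nGens R (C.X n) : ℤ))
      ⊆ (Finset.range (N+1) : Set ℕ) := by
    intro n hn
    simp only [Function.mem_support] at hn
    by_contra h
    simp only [Finset.coe_range, Set.mem_Iio, not_lt] at h
    refine hn ?_
    rw [← hDn n, hD0 n (by omega)]
    simp
  have hchi : gChi R C = ∑ n ∈ Finset.range (N+1), (-1:ℤ)^n * (gBetti R C n : ℤ) :=
    finsum_eq_sum_of_support_subset _ hsupb
  have hsumeq : ∀ m : ℕ, ∑ n ∈ Finset.range m, (-1:ℤ)^n * (nGens R (C.X n) : ℤ)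
      = ∑ n ∈ Finset.range m, (-1:ℤ)^n * (D n : ℤ) :=
    fun m => Finset.sum_congr rfl (fun n _ => by rw [hDn n])
  have main1 : gChi R C = ∑ᶠ n : ℕ, (-1 : ℤ) ^ n * (nGens R (C.X n) : ℤ) := by
    rw [hchi, finsum_eq_sum_of_support_subset _ hsupD, hsumeq, key N, hRk0 N le_rfl]
    push_cast
    ring
  refine ⟨main1, fun hstrict => ?_⟩
  -- strict case
  have hfree : ∀ n : ℕ, (nGens R (C.X (n+1)) : ℤ) = (Module.finrank R (C.X (n+1)) : ℤ) := by
    intro n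
    haveI := (hstrict.2 n).1
    haveI := (hstrict.2 n).2
    rw [nGens_eq_finrank_of_free]
  have hsupF : Function.support (fun n : ℕ => (-1:ℤ)^(n+1) * (Module.finrank R (C.X (n+1)) : ℤ))
      ⊆ (Finset.range N : Set ℕ) := by
    intro n hn
    simp only [Function.mem_support] at hn
    by_contra h
    simp only [Finset.coe_range, Set.mem_Iio, not_lt] at h
    haveI := hN (n+1) (by omega)
    refine hn ?_
    rw [Module.finrank_zero_of_subsingleton]
    simp
  rw [main1, finsum_eq_sum_of_support_subset _ hsupD,
    finsum_eq_sum_of_support_subset _ hsupF, Finset.sum_range_succ']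
  simp only [pow_zero, one_mul]
  rw [add_comm]
  congr 1
  exact Finset.sum_congr rfl (fun n _ => by rw [hfree n])
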